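/- Centered KL–variance bound: with τ = Σ_{i>k} p_i, KL(P̂‖P) = −log(1−τ), μ_P = Σ_{i=1}^{n} p_i v_i, and Var_P(V) = Σ_{i=1}^{n} p_i ‖v_i − μ_P‖₂², the output error satisfies ‖ Σ_i p_i v_i − Σ_i p̂_i v_i ‖₂ ≤ √( e^{KL(P̂‖P)} − 1 ) · √(Var_P(V)). -/

import Mathlib

/-- **Centered KL–variance bound.** With tail mass `τ = ∑_{i>k} p i`, `0 < τ < 1`,
`KL(P̂‖P) = −log(1−τ)`, full mean `μ_P = ∑ p i • v i` and variance
`Var_P(V) = ∑ p i ‖v i − μ_P‖²`, the output error satisfies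
`‖∑ p i • v i − ∑ p̂ i • v i‖ ≤ √(e^{KL(P̂‖P)} − 1) · √(Var_P(V))`. -/
theorem kl_variance_bound (n k d : ℕ) (hk : 1 ≤ k) (hkn : k < n)
    (s : Fin n → ℝ) (hs : ∀ i j : Fin n, i ≤ j → s j ≤ s i)
    (p phat : Fin n → ℝ)
    (hp : ∀ i, p i = Real.exp (s i) / ∑ j, Real.exp (s j))
    (hphat : ∀ i : Fin n, phat i =
      if (i : ℕ) < k then
        Real.exp (s i) /
          ∑ j ∈ Finset.univ.filter (fun j : Fin n => (j : ℕ) < k), Real.exp (s j)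
      else 0)
    (v : Fin n → EuclideanSpace ℝ (Fin d))
    (τ : ℝ) (hτ : τ = ∑ i ∈ Finset.univ.filter (fun i : Fin n => k ≤ (i : ℕ)), p i)
    (hτ0 : 0 < τ) (hτ1 : τ < 1)
    (KL : ℝ) (hKL : KL = -Real.log (1 - τ))
    (μP : EuclideanSpace ℝ (Fin d)) (hμP : μP = ∑ i, p i • v i)
    (varP : ℝ) (hvarP : varP = ∑ i, p i * ‖v i - μP‖ ^ 2) :
    ‖(∑ i, p i • v i) - ∑ i, phat i • v i‖
      ≤ Real.sqrt (Real.exp KL - 1) * Real.sqrt varP := by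
  have h1τ : (0:ℝ) < 1 - τ := by linarith
  -- basic positivity
  have hZ : (0:ℝ) < ∑ j, Real.exp (s j) := by
    apply Finset.sum_pos (fun j _ => Real.exp_pos _)
    exact ⟨⟨0, by omega⟩, Finset.mem_univ _⟩
  set A : Finset (Fin n) := Finset.univ.filter (fun j : Fin n => (j : ℕ) < k) with hA
  have hZk : (0:ℝ) < ∑ j ∈ A, Real.exp (s j) := by
    apply Finset.sum_pos (fun j _ => Real.exp_pos _)
    exact ⟨⟨0, by omega⟩, by simp only [hA, Finset.mem_filter, Finset.mem_univ, true_and]; omega⟩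
  have hpi : ∀ i, 0 < p i := fun i => by
    rw [hp]; exact div_pos (Real.exp_pos _) hZ
  have hsum_p : ∑ i, p i = 1 := by
    simp only [hp]; rw [← Finset.sum_div]; field_simp
  -- sum over A of p = 1 - τ
  have hsplit : (∑ i ∈ A, p i) + τ = 1 := by
    rw [hτ, hA]
    rw [show (Finset.univ.filter (fun i : Fin n => k ≤ (i : ℕ)))
        = Finset.univ.filter (fun i : Fin n => ¬ ((i:ℕ) < k)) by
      congr 1; ext i; simp [not_lt]]
    rw [Finset.sum_filter_add_sum_filter_not]
    exact hsum_p
  have hAsum : ∑ i ∈ A, p i = 1 - τ := by linarith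
  -- phat on A equals p/(1-τ)
  have hZkZ : (∑ j ∈ A, Real.exp (s j)) = (1 - τ) * ∑ j, Real.exp (s j) := by
    rw [← hAsum]
    simp only [hp]
    rw [← Finset.sum_div]
    field_simp
  have hphatA : ∀ i ∈ A, phat i = p i / (1 - τ) := by
    intro i hi
    have hik : (i:ℕ) < k := by simpa [hA] using hi
    rw [hphat, if_pos hik, hp, hZkZ]
    field_simp
  have hphatA' : ∀ i ∉ A, phat i = 0 := by
    intro i hi
    have hik : ¬ (i:ℕ) < k := by simpa [hA] using hi
    rw [hphat, if_neg hik]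
  have hsum_phat : ∑ i, phat i = 1 := by
    rw [← Finset.sum_filter_add_sum_filter_not Finset.univ (fun j : Fin n => (j:ℕ) < k)]
    rw [← hA]
    rw [Finset.sum_congr rfl hphatA,
        Finset.sum_congr rfl (fun i hi => hphatA' i (by simpa [hA] using hi))]
    rw [← Finset.sum_div, hAsum]
    field_simp
    simp
  -- the difference as a centered sum
  set q : Fin n → ℝ := fun i => p i - phat i with hq
  have hsumq : ∑ i, q i = 0 := by
    simp [hq, Finset.sum_sub_distrib, hsum_p, hsum_phat]
  have hdiff : (∑ i, p i • v i) - ∑ i, phat i • v i = ∑ i, q i • (v i - μP) := by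
    have : ∑ i, q i • (v i - μP) = (∑ i, q i • v i) - (∑ i, q i) • μP := by
      rw [Finset.sum_smul]
      rw [← Finset.sum_sub_distrib]
      congr 1; ext i; rw [smul_sub]
    rw [this, hsumq, zero_smul, sub_zero, ← Finset.sum_sub_distrib]
    congr 1; ext i; rw [hq, sub_smul]
  -- chi-square computation
  have hchi : ∑ i, q i ^ 2 / p i = τ / (1 - τ) := by
    rw [← Finset.sum_filter_add_sum_filter_not Finset.univ (fun j : Fin n => (j:ℕ) < k), ← hA]
    have h1 : ∑ i ∈ A, q i ^ 2 / p i = τ ^ 2 / (1 - τ) := by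
      have : ∀ i ∈ A, q i ^ 2 / p i = p i * (τ / (1 - τ)) ^ 2 := by
        intro i hi
        simp only [hq, hphatA i hi]
        have hpin := (hpi i).ne'
        field_simp
        ring
      rw [Finset.sum_congr rfl this, ← Finset.sum_mul, hAsum]
      field_simp
    have h2 : ∑ i ∈ Finset.univ.filter (fun j : Fin n => ¬ (j:ℕ) < k), q i ^ 2 / p i = τ := by
      have : ∀ i ∈ Finset.univ.filter (fun j : Fin n => ¬ (j:ℕ) < k),
          q i ^ 2 / p i = p i := by
        intro i hi
        have : phat i = 0 := hphatA' i (by simpa [hA] using hi)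
        simp only [hq, this, sub_zero]
        rw [sq, mul_div_assoc, div_self (hpi i).ne', mul_one]
      rw [Finset.sum_congr rfl this, hτ]
      congr 1; ext i; simp [not_lt]
    rw [h1, h2]
    field_simp
    ring
  -- Cauchy–Schwarz
  have hCS : ∑ i, |q i| * ‖v i - μP‖ ≤ Real.sqrt (τ / (1 - τ)) * Real.sqrt varP := by
    have key : ∀ i : Fin n, |q i| * ‖v i - μP‖
        = (|q i| / Real.sqrt (p i)) * (Real.sqrt (p i) * ‖v i - μP‖) := by
      intro i
      have : Real.sqrt (p i) ≠ 0 := (Real.sqrt_pos.mpr (hpi i)).ne'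
      field_simp
    calc ∑ i, |q i| * ‖v i - μP‖
        = ∑ i, (|q i| / Real.sqrt (p i)) * (Real.sqrt (p i) * ‖v i - μP‖) := by
          exact Finset.sum_congr rfl (fun i _ => key i)
      _ ≤ Real.sqrt (∑ i, (|q i| / Real.sqrt (p i)) ^ 2)
          * Real.sqrt (∑ i, (Real.sqrt (p i) * ‖v i - μP‖) ^ 2) :=
          Real.sum_mul_le_sqrt_mul_sqrt _ _ _
      _ = Real.sqrt (τ / (1 - τ)) * Real.sqrt varP := by
          congr 1
          · congr 1
            rw [← hchi]
            refine Finset.sum_congr rfl (fun i _ => ?_)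
            rw [div_pow, sq_abs, Real.sq_sqrt (hpi i).le]
          · congr 1
            rw [hvarP]
            refine Finset.sum_congr rfl (fun i _ => ?_)
            rw [mul_pow, Real.sq_sqrt (hpi i).le]
  have hnorm : ‖(∑ i, p i • v i) - ∑ i, phat i • v i‖ ≤ ∑ i, |q i| * ‖v i - μP‖ := by
    rw [hdiff]
    calc ‖∑ i, q i • (v i - μP)‖ ≤ ∑ i, ‖q i • (v i - μP)‖ := norm_sum_le _ _
      _ = ∑ i, |q i| * ‖v i - μP‖ := by
          refine Finset.sum_congr rfl (fun i _ => ?_)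
          rw [norm_smul, Real.norm_eq_abs]
  have hKLval : Real.exp KL - 1 = τ / (1 - τ) := by
    rw [hKL, Real.exp_neg, Real.exp_log h1τ]
    field_simp
    ring
  rw [hKLval]
  exact hnorm.trans hCS
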